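/- Let X, Y, Z, M₁₂, M₂₃, M₃₁ be finite-valued random variables satisfying: (i) H(X|M₁₂,M₃₁) = H(Y|M₁₂,M₂₃) = H(Z|M₂₃,M₃₁) = 0; (ii) I(M₁₂,M₃₁; Y,Z | X) = 0, I(M₁₂,M₂₃; X,Z | Y) = 0, I(M₂₃,M₃₁; X,Y | Z) = 0; and (iii) I(M₁₂; M₂₃) ≥ I(M₁₂; M₂₃ | M₃₁). Then H(M₂₃) ≥ RI(X;Z) + RI(X;Y) + H(Y, Z | X), where RI(A;B) := inf { I(A;B | Q) : Q = f(A) = g(B) almost surely for some functions f, g }. -/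

import Mathlib

open scoped BigOperators

noncomputable section
set_option linter.unusedSectionVars false
set_option maxHeartbeats 1000000

/-- Probability that the random variable `X` takes the value `a`,
with respect to the probability mass function `p` on the finite sample space `Ω`. -/
def prob {Ω : Type*} [Fintype Ω] {α : Type*} [DecidableEq α]
    (p : Ω → ℝ) (X : Ω → α) (a : α) : ℝ :=
  ∑ ω, if X ω = a then p ω else 0

/-- Shannon entropy (base 2) of the random variable `X`. -/
def ent {Ω : Type*} [Fintype Ω] {α : Type*} [Fintype α] [DecidableEq α]
    (p : Ω → ℝ) (X : Ω → α) : ℝ :=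
  -∑ a, prob p X a * Real.logb 2 (prob p X a)

/-- Conditional entropy `H(X|Y)`. -/
def condEnt {Ω : Type*} [Fintype Ω] {α β : Type*} [Fintype α] [DecidableEq α]
    [Fintype β] [DecidableEq β] (p : Ω → ℝ) (X : Ω → α) (Y : Ω → β) : ℝ :=
  ent p (fun ω => (X ω, Y ω)) - ent p Y

/-- Mutual information `I(X;Y)`. -/
def mi {Ω : Type*} [Fintype Ω] {α β : Type*} [Fintype α] [DecidableEq α]
    [Fintype β] [DecidableEq β] (p : Ω → ℝ) (X : Ω → α) (Y : Ω → β) : ℝ :=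
  ent p X + ent p Y - ent p (fun ω => (X ω, Y ω))

/-- Conditional mutual information `I(X;Y|Z)`. -/
def cmi {Ω : Type*} [Fintype Ω] {α β γ : Type*} [Fintype α] [DecidableEq α]
    [Fintype β] [DecidableEq β] [Fintype γ] [DecidableEq γ]
    (p : Ω → ℝ) (X : Ω → α) (Y : Ω → β) (Z : Ω → γ) : ℝ :=
  ent p (fun ω => (X ω, Z ω)) + ent p (fun ω => (Y ω, Z ω))
    - ent p (fun ω => (X ω, Y ω, Z ω)) - ent p Z

/-- Residual information `RI(A;B)`: the infimum of `I(A;B | f(A))` over all pairs of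
functions `(f,g)` such that `f(A) = g(B)` almost surely. -/
def RI {Ω : Type*} [Fintype Ω] {α β : Type*} [Fintype α] [DecidableEq α]
    [Fintype β] [DecidableEq β] (p : Ω → ℝ) (A : Ω → α) (B : Ω → β) : ℝ :=
  sInf {r : ℝ | ∃ (f : α → α) (g : β → α),
    (∀ ω, p ω ≠ 0 → f (A ω) = g (B ω)) ∧ r = cmi p A B (fun ω => f (A ω))}

section Basics
variable {Ω : Type*} [Fintype Ω] {α β : Type*} [Fintype α] [DecidableEq α]
  [Fintype β] [DecidableEq β] (p : Ω → ℝ)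

lemma prob_nonneg (hp : ∀ ω, 0 ≤ p ω) (X : Ω → α) (a : α) : 0 ≤ prob p X a :=
  Finset.sum_nonneg fun ω _ => by by_cases h : X ω = a <;> simp [h, hp ω]

lemma sum_prob (hsum : ∑ ω, p ω = 1) (X : Ω → α) : ∑ a, prob p X a = 1 := by
  unfold prob
  rw [Finset.sum_comm]
  simpa using hsum

lemma exists_of_prob_ne_zero {X : Ω → α} {a : α} (h : prob p X a ≠ 0) :
    ∃ ω, p ω ≠ 0 ∧ X ω = a := by
  obtain ⟨ω, -, hω⟩ := Finset.exists_ne_zero_of_sum_ne_zero h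
  by_cases hx : X ω = a
  · exact ⟨ω, by simpa [hx] using hω, hx⟩
  · simp [hx] at hω

lemma prob_apply_ne_zero {ω : Ω} (hp : ∀ ω, 0 ≤ p ω) (hω : p ω ≠ 0) (X : Ω → α) :
    prob p X (X ω) ≠ 0 := by
  have h1 : p ω ≤ prob p X (X ω) := by
    have := Finset.single_le_sum (f := fun ω' => if X ω' = X ω then p ω' else 0)
      (fun ω' _ => by by_cases h : X ω' = X ω <;> simp [h, hp ω']) (Finset.mem_univ ω)
    simpa [prob] using this
  have h2 : 0 < p ω := lt_of_le_of_ne (hp ω) (Ne.symm hω)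
  exact ne_of_gt (lt_of_lt_of_le h2 h1)

lemma prob_congr {X X' : Ω → α} (h : ∀ ω, p ω ≠ 0 → X ω = X' ω) (a : α) :
    prob p X a = prob p X' a := by
  refine Finset.sum_congr rfl fun ω _ => ?_
  by_cases hω : p ω = 0
  · simp [hω]
  · rw [h ω hω]

lemma prob_le_prob (hp : ∀ ω, 0 ≤ p ω) {X : Ω → α} {Y : Ω → β} {a : α} {b : β}
    (h : ∀ ω, X ω = a → Y ω = b) : prob p X a ≤ prob p Y b := by
  refine Finset.sum_le_sum fun ω _ => ?_
  by_cases hx : X ω = a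
  · simp [hx, h ω hx]
  · by_cases hy : Y ω = b <;> simp [hx, hy, hp ω]

lemma prob_comp_fiber (X : Ω → α) (f : α → β) (b : β) :
    prob p (fun ω => f (X ω)) b = ∑ a, if f a = b then prob p X a else 0 := by
  unfold prob
  have step : ∀ a : α, (if f a = b then ∑ ω, if X ω = a then p ω else 0 else 0)
      = ∑ ω, if X ω = a then (if f a = b then p ω else 0) else 0 := by
    intro a
    by_cases h : f a = b
    · simp [h]
    · simp [h]
  rw [Finset.sum_congr rfl fun a _ => step a, Finset.sum_comm]
  refine Finset.sum_congr rfl fun ω _ => ?_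
  rw [Finset.sum_ite_eq Finset.univ (X ω) (fun a => if f a = b then p ω else 0)]
  simp

lemma prob_comp_of_inv {X : Ω → α} {X' : Ω → β} {u : α → β} {v : β → α}
    (hu : ∀ ω, p ω ≠ 0 → u (X ω) = X' ω) (hv : ∀ ω, p ω ≠ 0 → v (X' ω) = X ω)
    {a : α} (ha : prob p X a ≠ 0) : prob p X' (u a) = prob p X a := by
  obtain ⟨ω₀, hω₀, hX₀⟩ := exists_of_prob_ne_zero p ha
  refine Finset.sum_congr rfl fun ω _ => ?_
  by_cases hω : p ω = 0
  · simp [hω]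
  · have h1 : X' ω = u (X ω) := (hu ω hω).symm
    have hvu : v (u (X ω)) = X ω := by rw [hu ω hω, hv ω hω]
    have hva : v (u a) = a := by rw [← hX₀, hu ω₀ hω₀, hv ω₀ hω₀]
    rw [h1]
    by_cases hx : X ω = a
    · simp [hx]
    · have : u (X ω) ≠ u a := fun hc => hx (by rw [← hvu, hc, hva])
      simp [hx, this]

lemma ent_congr {X : Ω → α} {X' : Ω → β} {u : α → β} {v : β → α}
    (hu : ∀ ω, p ω ≠ 0 → u (X ω) = X' ω) (hv : ∀ ω, p ω ≠ 0 → v (X' ω) = X ω) :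
    ent p X = ent p X' := by
  unfold ent
  congr 1
  rw [← Finset.sum_filter_of_ne (p := fun a => prob p X a ≠ 0)
      (fun a _ h => by intro h0; rw [h0] at h; simp at h),
    ← Finset.sum_filter_of_ne (s := (Finset.univ : Finset β))
      (p := fun b => prob p X' b ≠ 0)
      (fun b _ h => by intro h0; rw [h0] at h; simp at h)]
  refine Finset.sum_nbij' (i := u) (j := v) ?_ ?_ ?_ ?_ ?_
  · intro a ha
    simp only [Finset.mem_filter, Finset.mem_univ, true_and] at ha ⊢
    rw [prob_comp_of_inv p hu hv ha]; exact ha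
  · intro b hb
    simp only [Finset.mem_filter, Finset.mem_univ, true_and] at hb ⊢
    rw [prob_comp_of_inv p hv hu hb]; exact hb
  · intro a ha
    simp only [Finset.mem_filter, Finset.mem_univ, true_and] at ha
    obtain ⟨ω₀, hω₀, hX₀⟩ := exists_of_prob_ne_zero p ha
    rw [← hX₀, hu ω₀ hω₀, hv ω₀ hω₀]
  · intro b hb
    simp only [Finset.mem_filter, Finset.mem_univ, true_and] at hb
    obtain ⟨ω₀, hω₀, hX₀⟩ := exists_of_prob_ne_zero p hb
    rw [← hX₀, hv ω₀ hω₀, hu ω₀ hω₀]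
  · intro a ha
    simp only [Finset.mem_filter, Finset.mem_univ, true_and] at ha
    rw [prob_comp_of_inv p hu hv ha]

lemma ent_comp_sum (X : Ω → α) (f : α → β) :
    ent p (fun ω => f (X ω))
      = -∑ a, prob p X a * Real.logb 2 (prob p (fun ω => f (X ω)) (f a)) := by
  unfold ent
  congr 1
  set L : β → ℝ := fun b => Real.logb 2 (prob p (fun ω => f (X ω)) b) with hL
  calc ∑ b, prob p (fun ω => f (X ω)) b * L b
      = ∑ b, ∑ a, (if f a = b then prob p X a * L b else 0) := by
        refine Finset.sum_congr rfl fun b _ => ?_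
        rw [prob_comp_fiber, Finset.sum_mul]
        exact Finset.sum_congr rfl fun a _ => by
          by_cases h : f a = b <;> simp [h]
    _ = ∑ a, ∑ b, (if f a = b then prob p X a * L b else 0) := Finset.sum_comm
    _ = ∑ a, prob p X a * L (f a) := by
        refine Finset.sum_congr rfl fun a _ => ?_
        have step : ∀ b, (if f a = b then prob p X a * L b else 0)
            = if f a = b then prob p X a * L (f a) else 0 := by
          intro b
          by_cases h : f a = b
          · rw [if_pos h, if_pos h, ← h]
          · rw [if_neg h, if_neg h]
        rw [Finset.sum_congr rfl fun b _ => step b,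
          Finset.sum_ite_eq Finset.univ (f a)]
        simp

end Basics




section CMI
variable {Ω : Type*} [Fintype Ω] {α β γ : Type*} [Fintype α] [DecidableEq α]
  [Fintype β] [DecidableEq β] [Fintype γ] [DecidableEq γ]
  (p : Ω → ℝ) (U : Ω → α) (V : Ω → β) (W : Ω → γ)

lemma marg_right (c : γ) :
    ∑ a, prob p (fun ω => (U ω, W ω)) (a, c) = prob p W c := by
  unfold prob
  rw [Finset.sum_comm]
  refine Finset.sum_congr rfl fun ω _ => ?_
  have step : ∀ a, (if (U ω, W ω) = (a, c) then p ω else 0)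
      = if U ω = a then (if W ω = c then p ω else 0) else 0 := by
    intro a
    by_cases h1 : U ω = a <;> by_cases h2 : W ω = c <;> simp [h1, h2, Prod.ext_iff]
  rw [Finset.sum_congr rfl fun a _ => step a,
    Finset.sum_ite_eq Finset.univ (U ω)]
  simp

/-- marginalizing out the middle coordinate of a triple -/
lemma marg_mid (a : α) (c : γ) :
    ∑ b, prob p (fun ω => (U ω, V ω, W ω)) (a, b, c)
      = prob p (fun ω => (U ω, W ω)) (a, c) := by
  unfold prob
  rw [Finset.sum_comm]
  refine Finset.sum_congr rfl fun ω _ => ?_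
  have step : ∀ b, (if (U ω, V ω, W ω) = (a, b, c) then p ω else 0)
      = if V ω = b then (if (U ω, W ω) = (a, c) then p ω else 0) else 0 := by
    intro b
    by_cases h1 : V ω = b <;> by_cases h2 : U ω = a <;> by_cases h3 : W ω = c <;>
      simp [h1, h2, h3, Prod.ext_iff]
  rw [Finset.sum_congr rfl fun b _ => step b,
    Finset.sum_ite_eq Finset.univ (V ω)]
  simp

lemma prob_comp_inj {α' : Type*} [DecidableEq α'] {h : α → α'}
    (hinj : Function.Injective h) (X : Ω → α) (a : α) :
    prob p (fun ω => h (X ω)) (h a) = prob p X a := by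
  refine Finset.sum_congr rfl fun ω _ => ?_
  by_cases hx : X ω = a
  · simp [hx]
  · have : h (X ω) ≠ h a := fun hc => hx (hinj hc)
    simp [hx, this]

end CMI

section CMI2
variable {Ω : Type*} [Fintype Ω] {α β γ : Type*} [Fintype α] [DecidableEq α]
  [Fintype β] [DecidableEq β] [Fintype γ] [DecidableEq γ]
  (p : Ω → ℝ) (U : Ω → α) (V : Ω → β) (W : Ω → γ)

/-- the `t`-th term in the expansion of `cmi` as a single sum over triples -/
def cmiTerm (t : α × β × γ) : ℝ :=
  prob p (fun ω => (U ω, V ω, W ω)) t *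
    (Real.logb 2 (prob p (fun ω => (U ω, V ω, W ω)) t)
      + Real.logb 2 (prob p W t.2.2)
      - Real.logb 2 (prob p (fun ω => (U ω, W ω)) (t.1, t.2.2))
      - Real.logb 2 (prob p (fun ω => (V ω, W ω)) (t.2.1, t.2.2)))

lemma cmi_eq_sum : cmi p U V W = ∑ t, cmiTerm p U V W t := by
  have e1 : ent p (fun ω => (U ω, W ω))
      = -∑ t : α × β × γ, prob p (fun ω => (U ω, V ω, W ω)) t *
          Real.logb 2 (prob p (fun ω => (U ω, W ω)) (t.1, t.2.2)) := by
    simpa using ent_comp_sum p (fun ω => (U ω, V ω, W ω)) (fun t => (t.1, t.2.2))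
  have e2 : ent p (fun ω => (V ω, W ω))
      = -∑ t : α × β × γ, prob p (fun ω => (U ω, V ω, W ω)) t *
          Real.logb 2 (prob p (fun ω => (V ω, W ω)) (t.2.1, t.2.2)) := by
    simpa using ent_comp_sum p (fun ω => (U ω, V ω, W ω)) (fun t => (t.2.1, t.2.2))
  have e3 : ent p (fun ω => (U ω, V ω, W ω))
      = -∑ t : α × β × γ, prob p (fun ω => (U ω, V ω, W ω)) t *
          Real.logb 2 (prob p (fun ω => (U ω, V ω, W ω)) t) := by
    simpa using ent_comp_sum p (fun ω => (U ω, V ω, W ω)) (fun t => t)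
  have e4 : ent p W
      = -∑ t : α × β × γ, prob p (fun ω => (U ω, V ω, W ω)) t *
          Real.logb 2 (prob p W t.2.2) := by
    simpa using ent_comp_sum p (fun ω => (U ω, V ω, W ω)) (fun t => t.2.2)
  have expand : ∑ t, cmiTerm p U V W t
      = (∑ t : α × β × γ, prob p (fun ω => (U ω, V ω, W ω)) t *
          Real.logb 2 (prob p (fun ω => (U ω, V ω, W ω)) t))
        + (∑ t : α × β × γ, prob p (fun ω => (U ω, V ω, W ω)) t *
          Real.logb 2 (prob p W t.2.2))
        - (∑ t : α × β × γ, prob p (fun ω => (U ω, V ω, W ω)) t *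
          Real.logb 2 (prob p (fun ω => (U ω, W ω)) (t.1, t.2.2)))
        - (∑ t : α × β × γ, prob p (fun ω => (U ω, V ω, W ω)) t *
          Real.logb 2 (prob p (fun ω => (V ω, W ω)) (t.2.1, t.2.2))) := by
    rw [← Finset.sum_add_distrib, ← Finset.sum_sub_distrib, ← Finset.sum_sub_distrib]
    exact Finset.sum_congr rfl fun t _ => by unfold cmiTerm; ring
  unfold cmi
  rw [e1, e2, e3, e4, expand]
  ring

end CMI2


section CMI3
variable {Ω : Type*} [Fintype Ω] {α β γ : Type*} [Fintype α] [DecidableEq α]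
  [Fintype β] [DecidableEq β] [Fintype γ] [DecidableEq γ]
  (p : Ω → ℝ) (hp : ∀ ω, 0 ≤ p ω) (hsum : ∑ ω, p ω = 1)
  (U : Ω → α) (V : Ω → β) (W : Ω → γ)

/-- the "independent coupling" term -/
def Kt (t : α × β × γ) : ℝ :=
  prob p (fun ω => (U ω, W ω)) (t.1, t.2.2) *
    prob p (fun ω => (V ω, W ω)) (t.2.1, t.2.2) / prob p W t.2.2

include hp hsum

lemma Kt_nonneg (t : α × β × γ) : 0 ≤ Kt p U V W t :=
  div_nonneg (mul_nonneg (prob_nonneg p hp _ _) (prob_nonneg p hp _ _))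
    (prob_nonneg p hp _ _)

lemma sumK_le_one : ∑ t : α × β × γ, Kt p U V W t ≤ 1 := by
  have key : ∑ t : α × β × γ, Kt p U V W t
      = ∑ c, (∑ a, prob p (fun ω => (U ω, W ω)) (a, c)) *
          (∑ b, prob p (fun ω => (V ω, W ω)) (b, c)) / prob p W c := by
    rw [Fintype.sum_prod_type]
    have inner : ∀ a : α, ∑ bc : β × γ, Kt p U V W (a, bc)
        = ∑ c, ∑ b, Kt p U V W (a, b, c) := by
      intro a; rw [Fintype.sum_prod_type, Finset.sum_comm]
    rw [Finset.sum_congr rfl fun a _ => inner a, Finset.sum_comm]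
    refine Finset.sum_congr rfl fun c _ => ?_
    have inner2 : ∀ a : α, ∑ b, Kt p U V W (a, b, c)
        = prob p (fun ω => (U ω, W ω)) (a, c) *
            (∑ b, prob p (fun ω => (V ω, W ω)) (b, c)) / prob p W c := by
      intro a
      unfold Kt
      dsimp only
      rw [← Finset.sum_div, ← Finset.mul_sum]
    rw [Finset.sum_congr rfl fun a _ => inner2 a, ← Finset.sum_div,
      ← Finset.sum_mul]
  rw [key]
  have bnd : ∀ c : γ, (∑ a, prob p (fun ω => (U ω, W ω)) (a, c)) *
      (∑ b, prob p (fun ω => (V ω, W ω)) (b, c)) / prob p W c ≤ prob p W c := by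
    intro c
    rw [marg_right p U W c, marg_right p V W c]
    by_cases h : prob p W c = 0
    · simp [h]
    · rw [mul_div_assoc, div_self h, mul_one]
  calc ∑ c, (∑ a, prob p (fun ω => (U ω, W ω)) (a, c)) *
        (∑ b, prob p (fun ω => (V ω, W ω)) (b, c)) / prob p W c
      ≤ ∑ c, prob p W c := Finset.sum_le_sum fun c _ => bnd c
    _ = 1 := sum_prob p hsum W

omit hsum in
lemma jT_le_jUW (t : α × β × γ) :
    prob p (fun ω => (U ω, V ω, W ω)) t
      ≤ prob p (fun ω => (U ω, W ω)) (t.1, t.2.2) :=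
  prob_le_prob p hp fun ω h => by rw [← h]

omit hsum in
lemma jT_le_jVW (t : α × β × γ) :
    prob p (fun ω => (U ω, V ω, W ω)) t
      ≤ prob p (fun ω => (V ω, W ω)) (t.2.1, t.2.2) :=
  prob_le_prob p hp fun ω h => by rw [← h]

omit hsum in
lemma jT_le_jW (t : α × β × γ) :
    prob p (fun ω => (U ω, V ω, W ω)) t ≤ prob p W t.2.2 :=
  prob_le_prob p hp fun ω h => by rw [← h]

omit hsum in
/-- rewrite of a term of the cmi sum using the density ratio -/
lemma cmiTerm_eq_log (t : α × β × γ)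
    (h : prob p (fun ω => (U ω, V ω, W ω)) t ≠ 0) :
    cmiTerm p U V W t
      = prob p (fun ω => (U ω, V ω, W ω)) t *
          (-(Real.log (prob p (fun ω => (U ω, W ω)) (t.1, t.2.2) *
              prob p (fun ω => (V ω, W ω)) (t.2.1, t.2.2) /
              (prob p (fun ω => (U ω, V ω, W ω)) t * prob p W t.2.2))))
        / Real.log 2 := by
  have hT : 0 < prob p (fun ω => (U ω, V ω, W ω)) t :=
    lt_of_le_of_ne (prob_nonneg p hp _ _) (Ne.symm h)
  have hUW : 0 < prob p (fun ω => (U ω, W ω)) (t.1, t.2.2) :=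
    lt_of_lt_of_le hT (jT_le_jUW p hp U V W t)
  have hVW : 0 < prob p (fun ω => (V ω, W ω)) (t.2.1, t.2.2) :=
    lt_of_lt_of_le hT (jT_le_jVW p hp U V W t)
  have hW : 0 < prob p W t.2.2 := lt_of_lt_of_le hT (jT_le_jW p hp U V W t)
  unfold cmiTerm
  rw [Real.log_div (by positivity) (by positivity), Real.log_mul (ne_of_gt hUW)
    (ne_of_gt hVW), Real.log_mul (ne_of_gt hT) (ne_of_gt hW)]
  simp only [Real.logb]
  ring

omit hsum in
lemma cmiTerm_ge (t : α × β × γ)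
    (h : prob p (fun ω => (U ω, V ω, W ω)) t ≠ 0) :
    cmiTerm p U V W t
      ≥ (prob p (fun ω => (U ω, V ω, W ω)) t - Kt p U V W t) / Real.log 2 := by
  have hT : 0 < prob p (fun ω => (U ω, V ω, W ω)) t :=
    lt_of_le_of_ne (prob_nonneg p hp _ _) (Ne.symm h)
  have hUW : 0 < prob p (fun ω => (U ω, W ω)) (t.1, t.2.2) :=
    lt_of_lt_of_le hT (jT_le_jUW p hp U V W t)
  have hVW : 0 < prob p (fun ω => (V ω, W ω)) (t.2.1, t.2.2) :=
    lt_of_lt_of_le hT (jT_le_jVW p hp U V W t)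
  have hW : 0 < prob p W t.2.2 := lt_of_lt_of_le hT (jT_le_jW p hp U V W t)
  rw [cmiTerm_eq_log p hp U V W t h]
  have hρ : 0 < prob p (fun ω => (U ω, W ω)) (t.1, t.2.2) *
      prob p (fun ω => (V ω, W ω)) (t.2.1, t.2.2) /
      (prob p (fun ω => (U ω, V ω, W ω)) t * prob p W t.2.2) := by positivity
  have hlog := Real.log_le_sub_one_of_pos hρ
  have hK : prob p (fun ω => (U ω, V ω, W ω)) t *
      (prob p (fun ω => (U ω, W ω)) (t.1, t.2.2) *
        prob p (fun ω => (V ω, W ω)) (t.2.1, t.2.2) /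
        (prob p (fun ω => (U ω, V ω, W ω)) t * prob p W t.2.2))
      = Kt p U V W t := by
    unfold Kt
    field_simp
  have h2 : (0:ℝ) < Real.log 2 := Real.log_pos one_lt_two
  rw [ge_iff_le, div_le_div_iff_of_pos_right h2]
  nlinarith [hlog, hT, hK]

omit hp hsum in
lemma cmiTerm_zero_off (t : α × β × γ)
    (h : prob p (fun ω => (U ω, V ω, W ω)) t = 0) : cmiTerm p U V W t = 0 := by
  unfold cmiTerm; rw [h, zero_mul]

omit hp hsum in
lemma cmi_eq_sum_support :
    cmi p U V W
      = ∑ t ∈ Finset.univ.filter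
          (fun t => prob p (fun ω => (U ω, V ω, W ω)) t ≠ 0),
          cmiTerm p U V W t := by
  rw [cmi_eq_sum]
  rw [← Finset.sum_filter_of_ne
    (p := fun t => prob p (fun ω => (U ω, V ω, W ω)) t ≠ 0)]
  intro t _ hterm
  intro h0
  exact hterm (cmiTerm_zero_off p U V W t h0)

omit hp in
lemma sum_jT_support :
    ∑ t ∈ Finset.univ.filter
        (fun t => prob p (fun ω => (U ω, V ω, W ω)) t ≠ 0),
        prob p (fun ω => (U ω, V ω, W ω)) t = 1 := by
  rw [Finset.sum_filter_of_ne (fun t _ h => h)]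
  exact sum_prob p hsum _

lemma sumK_support_le_one :
    ∑ t ∈ Finset.univ.filter
        (fun t => prob p (fun ω => (U ω, V ω, W ω)) t ≠ 0),
        Kt p U V W t ≤ 1 := by
  refine le_trans (Finset.sum_le_sum_of_subset_of_nonneg (Finset.filter_subset _ _)
    (fun t _ _ => Kt_nonneg p hp hsum U V W t)) (sumK_le_one p hp hsum U V W)

lemma cmi_nonneg : 0 ≤ cmi p U V W := by
  rw [cmi_eq_sum_support]
  have h2 : (0:ℝ) < Real.log 2 := Real.log_pos one_lt_two
  calc (0:ℝ) ≤ (1 - ∑ t ∈ Finset.univ.filter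
        (fun t => prob p (fun ω => (U ω, V ω, W ω)) t ≠ 0),
        Kt p U V W t) / Real.log 2 := by
        apply div_nonneg _ (le_of_lt h2)
        linarith [sumK_support_le_one p hp hsum U V W]
    _ = (∑ t ∈ Finset.univ.filter
          (fun t => prob p (fun ω => (U ω, V ω, W ω)) t ≠ 0),
          (prob p (fun ω => (U ω, V ω, W ω)) t - Kt p U V W t)) / Real.log 2 := by
        rw [Finset.sum_sub_distrib, sum_jT_support p hsum U V W]
    _ = ∑ t ∈ Finset.univ.filter
          (fun t => prob p (fun ω => (U ω, V ω, W ω)) t ≠ 0),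
          (prob p (fun ω => (U ω, V ω, W ω)) t - Kt p U V W t) / Real.log 2 := by
        rw [Finset.sum_div]
    _ ≤ ∑ t ∈ Finset.univ.filter
          (fun t => prob p (fun ω => (U ω, V ω, W ω)) t ≠ 0),
          cmiTerm p U V W t := by
        refine Finset.sum_le_sum fun t ht => ?_
        simp only [Finset.mem_filter] at ht
        exact cmiTerm_ge p hp U V W t ht.2

end CMI3

section CMI4
variable {Ω : Type*} [Fintype Ω] {α β γ : Type*} [Fintype α] [DecidableEq α]
  [Fintype β] [DecidableEq β] [Fintype γ] [DecidableEq γ]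
  (p : Ω → ℝ) (hp : ∀ ω, 0 ≤ p ω) (hsum : ∑ ω, p ω = 1)
  (U : Ω → α) (V : Ω → β) (W : Ω → γ)

include hp hsum

/-- equality case: vanishing conditional mutual information forces the
pointwise factorization on the support -/
lemma cmi_eq_zero_imp (hc : cmi p U V W = 0) :
    ∀ a b c, prob p (fun ω => (U ω, V ω, W ω)) (a, b, c) ≠ 0 →
      prob p (fun ω => (U ω, V ω, W ω)) (a, b, c) * prob p W c
        = prob p (fun ω => (U ω, W ω)) (a, c) *
            prob p (fun ω => (V ω, W ω)) (b, c) := by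
  classical
  set S := Finset.univ.filter
    (fun t : α × β × γ => prob p (fun ω => (U ω, V ω, W ω)) t ≠ 0) with hS
  have h2 : (0:ℝ) < Real.log 2 := Real.log_pos one_lt_two
  have hsum0 : ∑ t ∈ S, cmiTerm p U V W t = 0 := by
    rw [← cmi_eq_sum_support]; exact hc
  set D : α × β × γ → ℝ := fun t => cmiTerm p U V W t -
    (prob p (fun ω => (U ω, V ω, W ω)) t - Kt p U V W t) / Real.log 2 with hD
  have hDnn : ∀ t ∈ S, 0 ≤ D t := by
    intro t ht
    simp only [hS, Finset.mem_filter] at ht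
    have := cmiTerm_ge p hp U V W t ht.2
    simp only [hD]; linarith
  have hDsum : ∑ t ∈ S, D t = ((∑ t ∈ S, Kt p U V W t) - 1) / Real.log 2 := by
    simp only [hD]
    rw [Finset.sum_sub_distrib, hsum0, ← Finset.sum_div,
      Finset.sum_sub_distrib, sum_jT_support p hsum U V W]
    field_simp
    ring
  have hDzero : ∀ t ∈ S, D t = 0 := by
    have hle : ∑ t ∈ S, D t ≤ 0 := by
      rw [hDsum]
      apply div_nonpos_of_nonpos_of_nonneg _ (le_of_lt h2)
      have := sumK_support_le_one p hp hsum U V W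
      rw [← hS] at this
      linarith
    have hge : 0 ≤ ∑ t ∈ S, D t := Finset.sum_nonneg hDnn
    have : ∑ t ∈ S, D t = 0 := le_antisymm hle hge
    exact fun t ht => le_antisymm (by
      by_contra hcon
      push_neg at hcon
      have hrest : 0 ≤ ∑ t' ∈ S.erase t, D t' :=
        Finset.sum_nonneg fun t' ht' => hDnn t' (Finset.mem_of_mem_erase ht')
      rw [← Finset.add_sum_erase S D ht] at this
      linarith) (hDnn t ht)
  intro a b c hne
  have htS : (a, b, c) ∈ S := by simp [hS, hne]
  have hzero := hDzero (a, b, c) htS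
  -- unpack
  have hT : 0 < prob p (fun ω => (U ω, V ω, W ω)) (a, b, c) :=
    lt_of_le_of_ne (prob_nonneg p hp _ _) (Ne.symm hne)
  have hUW : 0 < prob p (fun ω => (U ω, W ω)) (a, c) := by
    have := jT_le_jUW p hp U V W (a, b, c); dsimp at this; linarith
  have hVW : 0 < prob p (fun ω => (V ω, W ω)) (b, c) := by
    have := jT_le_jVW p hp U V W (a, b, c); dsimp at this; linarith
  have hW : 0 < prob p W c := by
    have := jT_le_jW p hp U V W (a, b, c); dsimp at this; linarith
  set ρ : ℝ := prob p (fun ω => (U ω, W ω)) (a, c) *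
      prob p (fun ω => (V ω, W ω)) (b, c) /
      (prob p (fun ω => (U ω, V ω, W ω)) (a, b, c) * prob p W c) with hρdef
  have hρpos : 0 < ρ := by rw [hρdef]; positivity
  have hlogeq : cmiTerm p U V W (a, b, c)
      = prob p (fun ω => (U ω, V ω, W ω)) (a, b, c) * (-(Real.log ρ))
        / Real.log 2 := by
    have := cmiTerm_eq_log p hp U V W (a, b, c) hne
    dsimp at this ⊢
    exact this
  have hKρ : Kt p U V W (a, b, c)
      = prob p (fun ω => (U ω, V ω, W ω)) (a, b, c) * ρ := by
    rw [hρdef]; unfold Kt; dsimp only; field_simp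
  simp only [hD] at hzero
  rw [hlogeq, hKρ, div_sub_div_same] at hzero
  have hmul : prob p (fun ω => (U ω, V ω, W ω)) (a, b, c) * (-(Real.log ρ))
      = prob p (fun ω => (U ω, V ω, W ω)) (a, b, c)
        - prob p (fun ω => (U ω, V ω, W ω)) (a, b, c) * ρ := by
    field_simp at hzero
    linarith
  have hlogρ : -(Real.log ρ) = 1 - ρ := by
    have := mul_left_cancel₀ (ne_of_gt hT)
      (by rw [hmul]; ring : prob p (fun ω => (U ω, V ω, W ω)) (a, b, c) * (-(Real.log ρ))
        = prob p (fun ω => (U ω, V ω, W ω)) (a, b, c) * (1 - ρ))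
    exact this
  have hρ1 : ρ = 1 := by
    by_contra hρne
    have := Real.log_lt_sub_one_of_pos hρpos hρne
    linarith
  have hden : prob p (fun ω => (U ω, V ω, W ω)) (a, b, c) * prob p W c ≠ 0 :=
    ne_of_gt (by positivity)
  have := (div_eq_one_iff_eq hden).mp (by rw [← hρdef]; exact hρ1)
  linarith [this]

omit hsum in
/-- converse: the pointwise factorization forces `cmi = 0` -/
lemma cmi_eq_zero_of
    (hfac : ∀ a b c, prob p (fun ω => (U ω, V ω, W ω)) (a, b, c) ≠ 0 →
      prob p (fun ω => (U ω, V ω, W ω)) (a, b, c) * prob p W c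
        = prob p (fun ω => (U ω, W ω)) (a, c) *
            prob p (fun ω => (V ω, W ω)) (b, c)) :
    cmi p U V W = 0 := by
  rw [cmi_eq_sum]
  refine Finset.sum_eq_zero fun t _ => ?_
  obtain ⟨a, b, c⟩ := t
  by_cases hne : prob p (fun ω => (U ω, V ω, W ω)) (a, b, c) = 0
  · exact cmiTerm_zero_off p U V W _ hne
  · have hT : 0 < prob p (fun ω => (U ω, V ω, W ω)) (a, b, c) :=
      lt_of_le_of_ne (prob_nonneg p hp _ _) (Ne.symm hne)
    have hW : 0 < prob p W c := by
      have := jT_le_jW p hp U V W (a, b, c); dsimp at this; linarith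
    have hden : prob p (fun ω => (U ω, V ω, W ω)) (a, b, c) * prob p W c ≠ 0 :=
      ne_of_gt (by positivity)
    have hρ1 : prob p (fun ω => (U ω, W ω)) (a, c) *
        prob p (fun ω => (V ω, W ω)) (b, c) /
        (prob p (fun ω => (U ω, V ω, W ω)) (a, b, c) * prob p W c) = 1 := by
      rw [div_eq_one_iff_eq hden, ← hfac a b c hne]
    have := cmiTerm_eq_log p hp U V W (a, b, c) hne
    dsimp at this
    rw [this, hρ1]
    simp

end CMI4

section Algebra
variable {Ω : Type*} [Fintype Ω] {α β γ δ : Type*} [Fintype α] [DecidableEq α]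
  [Fintype β] [DecidableEq β] [Fintype γ] [DecidableEq γ]
  [Fintype δ] [DecidableEq δ]
  (p : Ω → ℝ) (hp : ∀ ω, 0 ≤ p ω) (hsum : ∑ ω, p ω = 1)

lemma cmi_comm (U : Ω → α) (V : Ω → β) (W : Ω → γ) :
    cmi p U V W = cmi p V U W := by
  have e : ent p (fun ω => (U ω, V ω, W ω)) = ent p (fun ω => (V ω, U ω, W ω)) :=
    ent_congr p (u := fun t => (t.2.1, t.1, t.2.2)) (v := fun t => (t.2.1, t.1, t.2.2))
      (fun ω _ => rfl) (fun ω _ => rfl)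
  unfold cmi
  rw [e]; ring

lemma cmi_congr1 {U : Ω → α} {U' : Ω → β} (V : Ω → γ) (W : Ω → δ)
    {u : α → β} {v : β → α}
    (hu : ∀ ω, p ω ≠ 0 → u (U ω) = U' ω) (hv : ∀ ω, p ω ≠ 0 → v (U' ω) = U ω) :
    cmi p U V W = cmi p U' V W := by
  have e1 : ent p (fun ω => (U ω, W ω)) = ent p (fun ω => (U' ω, W ω)) :=
    ent_congr p (u := fun t => (u t.1, t.2)) (v := fun t => (v t.1, t.2))
      (fun ω hω => by dsimp only; rw [hu ω hω]) (fun ω hω => by dsimp only; rw [hv ω hω])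
  have e2 : ent p (fun ω => (U ω, V ω, W ω)) = ent p (fun ω => (U' ω, V ω, W ω)) :=
    ent_congr p (u := fun t => (u t.1, t.2)) (v := fun t => (v t.1, t.2))
      (fun ω hω => by dsimp only; rw [hu ω hω]) (fun ω hω => by dsimp only; rw [hv ω hω])
  unfold cmi
  rw [e1, e2]

lemma cmi_congr2 (U : Ω → α) {V : Ω → β} {V' : Ω → γ} (W : Ω → δ)
    {u : β → γ} {v : γ → β}
    (hu : ∀ ω, p ω ≠ 0 → u (V ω) = V' ω) (hv : ∀ ω, p ω ≠ 0 → v (V' ω) = V ω) :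
    cmi p U V W = cmi p U V' W := by
  rw [cmi_comm, cmi_congr1 p U W hu hv, cmi_comm]

lemma cmi_congr3 (U : Ω → α) (V : Ω → β) {W : Ω → γ} {W' : Ω → δ}
    {u : γ → δ} {v : δ → γ}
    (hu : ∀ ω, p ω ≠ 0 → u (W ω) = W' ω) (hv : ∀ ω, p ω ≠ 0 → v (W' ω) = W ω) :
    cmi p U V W = cmi p U V W' := by
  have e1 : ent p (fun ω => (U ω, W ω)) = ent p (fun ω => (U ω, W' ω)) :=
    ent_congr p (u := fun t => (t.1, u t.2)) (v := fun t => (t.1, v t.2))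
      (fun ω hω => by dsimp only; rw [hu ω hω]) (fun ω hω => by dsimp only; rw [hv ω hω])
  have e2 : ent p (fun ω => (V ω, W ω)) = ent p (fun ω => (V ω, W' ω)) :=
    ent_congr p (u := fun t => (t.1, u t.2)) (v := fun t => (t.1, v t.2))
      (fun ω hω => by dsimp only; rw [hu ω hω]) (fun ω hω => by dsimp only; rw [hv ω hω])
  have e3 : ent p (fun ω => (U ω, V ω, W ω)) = ent p (fun ω => (U ω, V ω, W' ω)) :=
    ent_congr p (u := fun t => (t.1, t.2.1, u t.2.2)) (v := fun t => (t.1, t.2.1, v t.2.2))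
      (fun ω hω => by dsimp only; rw [hu ω hω]) (fun ω hω => by dsimp only; rw [hv ω hω])
  have e4 : ent p W = ent p W' := ent_congr p hu hv
  unfold cmi
  rw [e1, e2, e3, e4]

/-- chain rule: `I(T; R S | W) = I(T;R|W) + I(T;S|R W)` -/
lemma cmi_chain {ι : Type*} [Fintype ι] [DecidableEq ι]
    (T : Ω → ι) (R : Ω → α) (S : Ω → β) (W : Ω → γ) :
    cmi p T (fun ω => (R ω, S ω)) W
      = cmi p T R W + cmi p T S (fun ω => (R ω, W ω)) := by
  have e1 : ent p (fun ω => ((R ω, S ω), W ω))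
      = ent p (fun ω => (S ω, (R ω, W ω))) :=
    ent_congr p (u := fun t => (t.1.2, (t.1.1, t.2))) (v := fun t => ((t.2.1, t.1), t.2.2))
      (fun ω _ => rfl) (fun ω _ => rfl)
  have e2 : ent p (fun ω => (T ω, (R ω, S ω), W ω))
      = ent p (fun ω => (T ω, S ω, (R ω, W ω))) :=
    ent_congr p (u := fun t => (t.1, t.2.1.2, (t.2.1.1, t.2.2)))
      (v := fun t => (t.1, (t.2.2.1, t.2.1), t.2.2.2))
      (fun ω _ => rfl) (fun ω _ => rfl)
  unfold cmi
  rw [e1, e2]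
  ring

include hp hsum

lemma cmi_fn_le_left {U : Ω → α} {X : Ω → β} (V : Ω → γ) (W : Ω → δ)
    {φ : α × δ → β} (hφ : ∀ ω, p ω ≠ 0 → X ω = φ (U ω, W ω)) :
    cmi p X V W ≤ cmi p U V W := by
  have e_a : ent p (fun ω => (U ω, W ω)) = ent p (fun ω => ((U ω, X ω), W ω)) :=
    ent_congr p (u := fun t => ((t.1, φ t), t.2)) (v := fun t => (t.1.1, t.2))
      (fun ω hω => by dsimp only; rw [← hφ ω hω]) (fun ω _ => rfl)
  have e_b : ent p (fun ω => (U ω, V ω, W ω))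
      = ent p (fun ω => ((U ω, X ω), V ω, W ω)) :=
    ent_congr p (u := fun t => ((t.1, φ (t.1, t.2.2)), t.2))
      (v := fun t => (t.1.1, t.2))
      (fun ω hω => by dsimp only; rw [← hφ ω hω]) (fun ω _ => rfl)
  have h1 : cmi p U V W = cmi p (fun ω => (U ω, X ω)) V W := by
    unfold cmi; rw [e_a, e_b]
  have h2 : cmi p (fun ω => (U ω, X ω)) V W
      = cmi p X V W + cmi p U V (fun ω => (X ω, W ω)) := by
    rw [cmi_comm]
    have hswap : cmi p V (fun ω => (U ω, X ω)) W
        = cmi p V (fun ω => (X ω, U ω)) W :=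
      cmi_congr2 p V W (u := fun t => (t.2, t.1)) (v := fun t => (t.2, t.1))
        (fun ω _ => rfl) (fun ω _ => rfl)
    rw [hswap, cmi_chain, cmi_comm p V X, cmi_comm p V U]
  have h3 : 0 ≤ cmi p U V (fun ω => (X ω, W ω)) := cmi_nonneg p hp hsum _ _ _
  linarith [h1, h2, h3]

lemma cmi_fn_le_right (U : Ω → α) {V : Ω → β} {X : Ω → γ} (W : Ω → δ)
    {ψ : β × δ → γ} (hψ : ∀ ω, p ω ≠ 0 → X ω = ψ (V ω, W ω)) :
    cmi p U X W ≤ cmi p U V W := by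
  rw [cmi_comm p U X, cmi_comm p U V]
  exact cmi_fn_le_left p hp hsum U W hψ

omit hp hsum in
lemma condEnt_eq_cmi (X : Ω → α) (Y : Ω → β) :
    condEnt p X Y = cmi p X X Y := by
  have e : ent p (fun ω => (X ω, X ω, Y ω)) = ent p (fun ω => (X ω, Y ω)) :=
    ent_congr p (u := fun t => (t.1, t.2.2)) (v := fun t => (t.1, t))
      (fun ω _ => rfl) (fun ω _ => rfl)
  unfold condEnt cmi
  rw [e]; ring

lemma condEnt_nonneg (X : Ω → α) (Y : Ω → β) : 0 ≤ condEnt p X Y := by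
  rw [condEnt_eq_cmi]
  exact cmi_nonneg p hp hsum _ _ _

omit hp hsum in
lemma condEnt_congr2 (X : Ω → α) {Y : Ω → β} {Y' : Ω → γ}
    {u : β → γ} {v : γ → β}
    (hu : ∀ ω, p ω ≠ 0 → u (Y ω) = Y' ω) (hv : ∀ ω, p ω ≠ 0 → v (Y' ω) = Y ω) :
    condEnt p X Y = condEnt p X Y' := by
  have e1 : ent p (fun ω => (X ω, Y ω)) = ent p (fun ω => (X ω, Y' ω)) :=
    ent_congr p (u := fun t => (t.1, u t.2)) (v := fun t => (t.1, v t.2))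
      (fun ω hω => by dsimp only; rw [hu ω hω]) (fun ω hω => by dsimp only; rw [hv ω hω])
  have e2 : ent p Y = ent p Y' := ent_congr p hu hv
  unfold condEnt
  rw [e1, e2]

/-- data processing for conditional entropy: if `V` is a.s. a function of
`(U, W)` then `H(V|W) ≤ H(U|W)`. -/
lemma condEnt_fn_le {U : Ω → α} {V : Ω → β} (W : Ω → γ)
    {ψ : α × γ → β} (hψ : ∀ ω, p ω ≠ 0 → V ω = ψ (U ω, W ω)) :
    condEnt p V W ≤ condEnt p U W := by
  have e : ent p (fun ω => (U ω, W ω)) = ent p (fun ω => (U ω, (V ω, W ω))) :=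
    ent_congr p (u := fun t => (t.1, (ψ t, t.2))) (v := fun t => (t.1, t.2.2))
      (fun ω hω => by dsimp only; rw [← hψ ω hω]) (fun ω _ => rfl)
  have key : condEnt p U W = condEnt p U (fun ω => (V ω, W ω)) + condEnt p V W := by
    unfold condEnt
    rw [e]; ring
  have h0 : 0 ≤ condEnt p U (fun ω => (V ω, W ω)) := condEnt_nonneg p hp hsum _ _
  linarith

end Algebra

section Determinism
variable {Ω : Type*} [Fintype Ω] {α β : Type*} [Fintype α] [DecidableEq α]
  [Fintype β] [DecidableEq β]
  (p : Ω → ℝ) (hp : ∀ ω, 0 ≤ p ω) (hsum : ∑ ω, p ω = 1)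

include hsum in
lemma exists_ne_zero : ∃ ω, p ω ≠ 0 := by
  by_contra h
  push_neg at h
  rw [Finset.sum_congr rfl fun ω _ => h ω] at hsum
  simp at hsum

include hp hsum in
/-- `H(X|Y) = 0` implies that `X` is a.s. a function of `Y`. -/
lemma condEnt_zero_fun {X : Ω → α} {Y : Ω → β} (hc : condEnt p X Y = 0) :
    ∃ φ : β → α, ∀ ω, p ω ≠ 0 → X ω = φ (Y ω) := by
  classical
  have hcmi : cmi p X X Y = 0 := by rw [← condEnt_eq_cmi]; exact hc
  have hfac := cmi_eq_zero_imp p hp hsum X X Y hcmi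
  have diag : ∀ a c, prob p (fun ω => (X ω, X ω, Y ω)) (a, a, c)
      = prob p (fun ω => (X ω, Y ω)) (a, c) := by
    intro a c
    refine Finset.sum_congr rfl fun ω _ => ?_
    by_cases h1 : X ω = a <;> by_cases h2 : Y ω = c <;>
      simp [h1, h2, Prod.ext_iff]
  have hXY : ∀ a c, prob p (fun ω => (X ω, Y ω)) (a, c) ≠ 0 →
      prob p (fun ω => (X ω, Y ω)) (a, c) = prob p Y c := by
    intro a c h
    have := hfac a a c (by rw [diag]; exact h)
    rw [diag] at this
    exact mul_left_cancel₀ h (by linarith)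
  have uniq : ∀ a a' c, prob p (fun ω => (X ω, Y ω)) (a, c) ≠ 0 →
      prob p (fun ω => (X ω, Y ω)) (a', c) ≠ 0 → a = a' := by
    intro a a' c h h'
    by_contra hne
    have hmarg : ∑ x, prob p (fun ω => (X ω, Y ω)) (x, c) = prob p Y c :=
      marg_right p X Y c
    have hpos : 0 < prob p Y c := by
      have := prob_nonneg p hp (fun ω => (X ω, Y ω)) (a, c)
      have := hXY a c h
      have := prob_nonneg p hp (fun ω => (X ω, Y ω)) (a, c)
      nlinarith [lt_of_le_of_ne (prob_nonneg p hp (fun ω => (X ω, Y ω)) (a, c)) (Ne.symm h), hXY a c h]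
    have hsub : ({a, a'} : Finset α) ⊆ Finset.univ := Finset.subset_univ _
    have hsum2 : prob p (fun ω => (X ω, Y ω)) (a, c)
        + prob p (fun ω => (X ω, Y ω)) (a', c)
        ≤ ∑ x, prob p (fun ω => (X ω, Y ω)) (x, c) := by
      rw [← Finset.sum_pair (f := fun x => prob p (fun ω => (X ω, Y ω)) (x, c)) hne]
      exact Finset.sum_le_sum_of_subset_of_nonneg hsub
        (fun x _ _ => prob_nonneg p hp _ _)
    rw [hmarg] at hsum2
    rw [hXY a c h, hXY a' c h'] at hsum2
    linarith
  obtain ⟨ω₀, hω₀⟩ := exists_ne_zero p hsum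
  have : Nonempty α := ⟨X ω₀⟩
  refine ⟨fun c => if h : ∃ a, prob p (fun ω => (X ω, Y ω)) (a, c) ≠ 0
    then h.choose else Classical.arbitrary α, fun ω hω => ?_⟩
  have hne : prob p (fun ω' => (X ω', Y ω')) (X ω, Y ω) ≠ 0 :=
    prob_apply_ne_zero p hp hω (fun ω' => (X ω', Y ω'))
  have hex : ∃ a, prob p (fun ω' => (X ω', Y ω')) (a, Y ω) ≠ 0 := ⟨X ω, hne⟩
  dsimp only
  rw [dif_pos hex]
  exact uniq (X ω) hex.choose (Y ω) hne hex.choose_spec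

end Determinism

section MoreMarg
variable {Ω : Type*} [Fintype Ω] {α β γ : Type*} [Fintype α] [DecidableEq α]
  [Fintype β] [DecidableEq β] [Fintype γ] [DecidableEq γ]
  (p : Ω → ℝ) (U : Ω → α) (V : Ω → β) (W : Ω → γ)

lemma marg_left (b : β) :
    ∑ a, prob p (fun ω => (U ω, V ω)) (a, b) = prob p V b := by
  unfold prob
  rw [Finset.sum_comm]
  refine Finset.sum_congr rfl fun ω _ => ?_
  have step : ∀ a, (if (U ω, V ω) = (a, b) then p ω else 0)
      = if U ω = a then (if V ω = b then p ω else 0) else 0 := by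
    intro a
    by_cases h1 : U ω = a <;> by_cases h2 : V ω = b <;> simp [h1, h2, Prod.ext_iff]
  rw [Finset.sum_congr rfl fun a _ => step a,
    Finset.sum_ite_eq Finset.univ (U ω)]
  simp

lemma marg_first (b : β) (c : γ) :
    ∑ a, prob p (fun ω => (U ω, V ω, W ω)) (a, b, c)
      = prob p (fun ω => (V ω, W ω)) (b, c) := by
  unfold prob
  rw [Finset.sum_comm]
  refine Finset.sum_congr rfl fun ω _ => ?_
  have step : ∀ a, (if (U ω, V ω, W ω) = (a, b, c) then p ω else 0)
      = if U ω = a then (if (V ω, W ω) = (b, c) then p ω else 0) else 0 := by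
    intro a
    by_cases h1 : U ω = a <;> by_cases h2 : V ω = b <;> by_cases h3 : W ω = c <;>
      simp [h1, h2, h3, Prod.ext_iff]
  rw [Finset.sum_congr rfl fun a _ => step a,
    Finset.sum_ite_eq Finset.univ (U ω)]
  simp

end MoreMarg

section MargSnd
variable {Ω : Type*} [Fintype Ω] {α β : Type*} [Fintype α] [DecidableEq α]
  [Fintype β] [DecidableEq β] (p : Ω → ℝ)

lemma marg_snd (U : Ω → α) (V : Ω → β) (a : α) :
    ∑ b, prob p (fun ω => (U ω, V ω)) (a, b) = prob p U a := by
  unfold prob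
  rw [Finset.sum_comm]
  refine Finset.sum_congr rfl fun ω _ => ?_
  have step : ∀ b, (if (U ω, V ω) = (a, b) then p ω else 0)
      = if V ω = b then (if U ω = a then p ω else 0) else 0 := by
    intro b
    by_cases h1 : U ω = a <;> by_cases h2 : V ω = b <;> simp [h1, h2, Prod.ext_iff]
  rw [Finset.sum_congr rfl fun b _ => step b,
    Finset.sum_ite_eq Finset.univ (V ω)]
  simp

end MargSnd

section DoubleMarkov
variable {Ω : Type*} [Fintype Ω] {α γ δ : Type*} [Fintype α] [DecidableEq α]
  [Fintype γ] [DecidableEq γ] [Fintype δ] [DecidableEq δ]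
  (p : Ω → ℝ) (hp : ∀ ω, 0 ≤ p ω) (hsum : ∑ ω, p ω = 1)

include hp hsum in
/-- the double Markov property: if `W ⊥ Z | X` and `W ⊥ X | Z` then there is a
common function `Q` of `X` and `Z` with `(X,Z) ⊥ W | Q`. -/
lemma double_markov (X : Ω → α) (Z : Ω → γ) (W : Ω → δ)
    (h1 : cmi p W Z X = 0) (h2 : cmi p W X Z = 0) :
    ∃ (f : α → α) (g : γ → α), (∀ ω, p ω ≠ 0 → f (X ω) = g (Z ω)) ∧
      cmi p (fun ω => (X ω, Z ω)) W (fun ω => f (X ω)) = 0 := by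
  classical
  obtain ⟨ω₀, hω₀⟩ := exists_ne_zero p hsum
  have hαne : Nonempty α := ⟨X ω₀⟩
  -- reorderings
  have hinj1 : Function.Injective (fun t : α × γ × δ => (t.2.2, t.2.1, t.1)) := by
    rintro ⟨a, b, c⟩ ⟨a', b', c'⟩ h
    simp only [Prod.ext_iff] at h ⊢
    tauto
  have hinj2 : Function.Injective (fun t : α × γ × δ => (t.2.2, t.1, t.2.1)) := by
    rintro ⟨a, b, c⟩ ⟨a', b', c'⟩ h
    simp only [Prod.ext_iff] at h ⊢
    tauto
  have cJ1 : ∀ x z w, prob p (fun ω => (W ω, Z ω, X ω)) (w, z, x)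
      = prob p (fun ω => (X ω, Z ω, W ω)) (x, z, w) := by
    intro x z w
    have := prob_comp_inj p hinj1 (fun ω => (X ω, Z ω, W ω)) (x, z, w)
    simpa using this
  have cJ2 : ∀ x z w, prob p (fun ω => (W ω, X ω, Z ω)) (w, x, z)
      = prob p (fun ω => (X ω, Z ω, W ω)) (x, z, w) := by
    intro x z w
    have := prob_comp_inj p hinj2 (fun ω => (X ω, Z ω, W ω)) (x, z, w)
    simpa using this
  have cWX : ∀ w x, prob p (fun ω => (W ω, X ω)) (w, x)
      = prob p (fun ω => (X ω, W ω)) (x, w) := by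
    intro w x
    have := prob_comp_inj p Prod.swap_injective (fun ω => (X ω, W ω)) (x, w)
    simpa [Prod.swap] using this
  have cZX : ∀ z x, prob p (fun ω => (Z ω, X ω)) (z, x)
      = prob p (fun ω => (X ω, Z ω)) (x, z) := by
    intro z x
    have := prob_comp_inj p Prod.swap_injective (fun ω => (X ω, Z ω)) (x, z)
    simpa [Prod.swap] using this
  have cWZ : ∀ w z, prob p (fun ω => (W ω, Z ω)) (w, z)
      = prob p (fun ω => (Z ω, W ω)) (z, w) := by
    intro w z
    have := prob_comp_inj p Prod.swap_injective (fun ω => (Z ω, W ω)) (z, w)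
    simpa [Prod.swap] using this
  have hfac1 := cmi_eq_zero_imp p hp hsum W Z X h1
  have hfac2 := cmi_eq_zero_imp p hp hsum W X Z h2
  -- full conditional independence identity W ⊥ Z | X
  have I1 : ∀ x z w, prob p (fun ω => (X ω, Z ω, W ω)) (x, z, w) * prob p X x
      = prob p (fun ω => (X ω, Z ω)) (x, z) *
          prob p (fun ω => (X ω, W ω)) (x, w) := by
    intro x z0 w
    have key : ∀ z, prob p (fun ω => (X ω, Z ω, W ω)) (x, z, w) * prob p X x
        ≤ prob p (fun ω => (X ω, Z ω)) (x, z) *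
            prob p (fun ω => (X ω, W ω)) (x, w) := by
      intro z
      by_cases hJ : prob p (fun ω => (X ω, Z ω, W ω)) (x, z, w) = 0
      · rw [hJ, zero_mul]
        exact mul_nonneg (prob_nonneg p hp _ _) (prob_nonneg p hp _ _)
      · have := hfac1 w z x (by rw [cJ1]; exact hJ)
        rw [cJ1, cWX, cZX] at this
        rw [this]
        exact le_of_eq (mul_comm _ _)
    have hsums : ∑ z, prob p (fun ω => (X ω, Z ω, W ω)) (x, z, w) * prob p X x
        = ∑ z, prob p (fun ω => (X ω, Z ω)) (x, z) *
            prob p (fun ω => (X ω, W ω)) (x, w) := by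
      rw [← Finset.sum_mul, ← Finset.sum_mul]
      rw [marg_mid p X Z W x w, marg_snd p X Z x]
      ring
    exact (Finset.sum_eq_sum_iff_of_le (fun z _ => key z)).mp hsums z0
      (Finset.mem_univ z0)
  -- full conditional independence identity W ⊥ X | Z
  have I2 : ∀ x z w, prob p (fun ω => (X ω, Z ω, W ω)) (x, z, w) * prob p Z z
      = prob p (fun ω => (X ω, Z ω)) (x, z) *
          prob p (fun ω => (Z ω, W ω)) (z, w) := by
    intro x0 z w
    have key : ∀ x, prob p (fun ω => (X ω, Z ω, W ω)) (x, z, w) * prob p Z z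
        ≤ prob p (fun ω => (X ω, Z ω)) (x, z) *
            prob p (fun ω => (Z ω, W ω)) (z, w) := by
      intro x
      by_cases hJ : prob p (fun ω => (X ω, Z ω, W ω)) (x, z, w) = 0
      · rw [hJ, zero_mul]
        exact mul_nonneg (prob_nonneg p hp _ _) (prob_nonneg p hp _ _)
      · have := hfac2 w x z (by rw [cJ2]; exact hJ)
        rw [cJ2, cWZ] at this
        rw [this]
        exact le_of_eq (mul_comm _ _)
    have hsums : ∑ x, prob p (fun ω => (X ω, Z ω, W ω)) (x, z, w) * prob p Z z
        = ∑ x, prob p (fun ω => (X ω, Z ω)) (x, z) *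
            prob p (fun ω => (Z ω, W ω)) (z, w) := by
      rw [← Finset.sum_mul, ← Finset.sum_mul]
      rw [marg_first p X Z W z w, marg_left p X Z z]
      ring
    exact (Finset.sum_eq_sum_iff_of_le (fun x _ => key x)).mp hsums x0
      (Finset.mem_univ x0)
  -- conditional equality of conditionals along the support
  have CE : ∀ x z w, prob p (fun ω => (X ω, Z ω)) (x, z) ≠ 0 →
      prob p (fun ω => (X ω, W ω)) (x, w) * prob p Z z
        = prob p (fun ω => (Z ω, W ω)) (z, w) * prob p X x := by
    intro x z w hP2
    have e1 := I1 x z w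
    have e2 := I2 x z w
    apply mul_left_cancel₀ hP2
    linear_combination prob p X x * e2 - prob p Z z * e1
  -- the Gács–Körner style common part
  set base : α → α → Prop := fun x x' =>
    ∃ z, prob p (fun ω => (X ω, Z ω)) (x, z) ≠ 0 ∧
      prob p (fun ω => (X ω, Z ω)) (x', z) ≠ 0 with hbase
  set Rel : α → α → Prop := Relation.EqvGen base with hRel
  have hrefl : ∀ x, Rel x x := fun x => Relation.EqvGen.refl x
  have hsymm : ∀ {x y}, Rel x y → Rel y x := fun h => Relation.EqvGen.symm _ _ h
  have htrans : ∀ {x y z'}, Rel x y → Rel y z' → Rel x z' :=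
    fun h h' => Relation.EqvGen.trans _ _ _ h h'
  set e := Fintype.equivFin α with he
  set cls : α → Finset α := fun x => Finset.univ.filter (fun x' => Rel x x')
    with hcls
  have hxcls : ∀ x, x ∈ cls x := by
    intro x; simp [hcls, hrefl x]
  have hclsne : ∀ x, ((cls x).image e).Nonempty :=
    fun x => ⟨e x, Finset.mem_image_of_mem _ (hxcls x)⟩
  set f : α → α := fun x => e.symm (((cls x).image e).min' (hclsne x)) with hf
  have min'_congr : ∀ {n : ℕ} {s t : Finset (Fin n)} (hs : s.Nonempty)
      (ht : t.Nonempty), s = t → s.min' hs = t.min' ht := by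
    intro n s t hs ht h
    subst h
    rfl
  have hcls_eq : ∀ x x', Rel x x' → cls x = cls x' := by
    intro x x' h
    ext y
    simp only [hcls, Finset.mem_filter, Finset.mem_univ, true_and]
    exact ⟨fun hy => htrans (hsymm h) hy, fun hy => htrans h hy⟩
  have hf_const : ∀ x x', Rel x x' → f x = f x' := by
    intro x x' h
    simp only [hf]
    exact congrArg e.symm (min'_congr _ _ (by rw [hcls_eq x x' h]))
  have hf_mem : ∀ x, Rel x (f x) := by
    intro x
    have hmin := Finset.min'_mem ((cls x).image e) (hclsne x)
    obtain ⟨y, hy, hey⟩ := Finset.mem_image.mp hmin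
    have : f x = y := by
      simp only [hf, ← hey, Equiv.symm_apply_apply]
    rw [this]
    simpa [hcls, Finset.mem_filter] using hy
  have hf_inv : ∀ x x', f x' = f x → Rel x x' := by
    intro x x' h
    exact htrans (hf_mem x) (htrans (by rw [← h]; exact hrefl _) (hsymm (hf_mem x')))
  -- the partner function on the `Z` side
  set g : γ → α := fun z =>
    if h : ∃ x, prob p (fun ω => (X ω, Z ω)) (x, z) ≠ 0
    then f h.choose else Classical.arbitrary α with hg
  have hfg : ∀ ω, p ω ≠ 0 → f (X ω) = g (Z ω) := by
    intro ω hω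
    have hne : prob p (fun ω' => (X ω', Z ω')) (X ω, Z ω) ≠ 0 :=
      prob_apply_ne_zero p hp hω (fun ω' => (X ω', Z ω'))
    have hex : ∃ x, prob p (fun ω' => (X ω', Z ω')) (x, Z ω) ≠ 0 := ⟨X ω, hne⟩
    have hrel : Rel (X ω) hex.choose :=
      Relation.EqvGen.rel _ _ ⟨Z ω, hne, hex.choose_spec⟩
    simp only [hg]
    rw [dif_pos hex]
    exact hf_const _ _ hrel
  -- key transport along the equivalence classes
  have Cstar : ∀ x x', Rel x x' → x = x' ∨
      (prob p X x ≠ 0 ∧ prob p X x' ≠ 0 ∧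
        ∀ w, prob p (fun ω => (X ω, W ω)) (x, w) * prob p X x'
          = prob p (fun ω => (X ω, W ω)) (x', w) * prob p X x) := by
    intro x x' h
    induction h with
    | rel a b hab =>
        obtain ⟨z, ha, hb⟩ := hab
        have hPa : 0 < prob p (fun ω => (X ω, Z ω)) (a, z) :=
          lt_of_le_of_ne (prob_nonneg p hp _ _) (Ne.symm ha)
        have hPb : 0 < prob p (fun ω => (X ω, Z ω)) (b, z) :=
          lt_of_le_of_ne (prob_nonneg p hp _ _) (Ne.symm hb)
        have hXa : 0 < prob p X a :=
          lt_of_lt_of_le hPa (prob_le_prob p hp fun ω h => congrArg Prod.fst h)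
        have hXb : 0 < prob p X b :=
          lt_of_lt_of_le hPb (prob_le_prob p hp fun ω h => congrArg Prod.fst h)
        have hZz : 0 < prob p Z z :=
          lt_of_lt_of_le hPa (prob_le_prob p hp fun ω h => congrArg Prod.snd h)
        right
        refine ⟨ne_of_gt hXa, ne_of_gt hXb, fun w => ?_⟩
        have ea := CE a z w ha
        have eb := CE b z w hb
        apply mul_right_cancel₀ (ne_of_gt hZz)
        linear_combination prob p X b * ea - prob p X a * eb
    | refl a => exact Or.inl rfl
    | symm a b hab ih =>
        rcases ih with h | ⟨h1, h2, h3⟩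
        · exact Or.inl h.symm
        · exact Or.inr ⟨h2, h1, fun w => (h3 w).symm⟩
    | trans a b c hab hbc ih1 ih2 =>
        rcases ih1 with h | ⟨ha1, hb1, h1'⟩
        · rwa [h]
        rcases ih2 with h | ⟨hb2, hc2, h2'⟩
        · rw [← h]; exact Or.inr ⟨ha1, hb1, h1'⟩
        right
        refine ⟨ha1, hc2, fun w => ?_⟩
        apply mul_right_cancel₀ hb1
        linear_combination prob p X c * h1' w + prob p X a * h2' w
  -- per-element factorization identity within a class
  have perx : ∀ x z w x', f x' = f x →
      prob p (fun ω => (X ω, Z ω, W ω)) (x, z, w) * prob p X x'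
        = prob p (fun ω => (X ω, Z ω)) (x, z) *
            prob p (fun ω => (X ω, W ω)) (x', w) := by
    intro x z w x' hfx
    rcases Cstar x x' (hf_inv x x' hfx) with h | ⟨hx, hx', heq⟩
    · rw [← h]; exact I1 x z w
    · apply mul_right_cancel₀ hx
      linear_combination prob p X x' * I1 x z w +
        prob p (fun ω => (X ω, Z ω)) (x, z) * heq w
  refine ⟨f, g, hfg, ?_⟩
  -- identify the joint distributions involving Q = f ∘ X
  have hG : ∀ x z w q, prob p (fun ω => ((X ω, Z ω), W ω, f (X ω))) ((x, z), w, q)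
      = if f x = q then prob p (fun ω => (X ω, Z ω, W ω)) (x, z, w) else 0 := by
    intro x z w q
    by_cases hq : f x = q
    · rw [if_pos hq]
      refine Finset.sum_congr rfl fun ω _ => ?_
      have : (((X ω, Z ω), W ω, f (X ω)) = ((x, z), w, q))
          ↔ ((X ω, Z ω, W ω) = (x, z, w)) := by
        constructor
        · intro h
          simp only [Prod.ext_iff] at h ⊢
          tauto
        · intro h
          simp only [Prod.ext_iff] at h ⊢
          refine ⟨⟨h.1, h.2.1⟩, h.2.2, ?_⟩
          rw [h.1, hq]
      rw [if_congr this rfl rfl]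
    · rw [if_neg hq]
      refine Finset.sum_eq_zero fun ω _ => ?_
      rw [if_neg]
      intro h
      simp only [Prod.ext_iff] at h
      exact hq (by rw [← h.1.1]; exact h.2.2)
  have hXZQ : ∀ x z q, prob p (fun ω => ((X ω, Z ω), f (X ω))) ((x, z), q)
      = if f x = q then prob p (fun ω => (X ω, Z ω)) (x, z) else 0 := by
    intro x z q
    by_cases hq : f x = q
    · rw [if_pos hq]
      refine Finset.sum_congr rfl fun ω _ => ?_
      have : (((X ω, Z ω), f (X ω)) = ((x, z), q)) ↔ ((X ω, Z ω) = (x, z)) := by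
        constructor
        · intro h
          simp only [Prod.ext_iff] at h ⊢
          tauto
        · intro h
          simp only [Prod.ext_iff] at h ⊢
          refine ⟨⟨h.1, h.2⟩, ?_⟩
          rw [h.1, hq]
      rw [if_congr this rfl rfl]
    · rw [if_neg hq]
      refine Finset.sum_eq_zero fun ω _ => ?_
      rw [if_neg]
      intro h
      simp only [Prod.ext_iff] at h
      exact hq (by rw [← h.1.1]; exact h.2)
  have hPQ : ∀ q, prob p (fun ω => f (X ω)) q
      = ∑ x', if f x' = q then prob p X x' else 0 :=
    fun q => prob_comp_fiber p X f q
  have hWQ : ∀ w q, prob p (fun ω => (W ω, f (X ω))) (w, q)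
      = ∑ x', if f x' = q then prob p (fun ω => (X ω, W ω)) (x', w) else 0 := by
    intro w q
    have hfib := prob_comp_fiber p (fun ω => (X ω, W ω))
      (fun t => (t.2, f t.1)) (w, q)
    have hl : prob p (fun ω => (fun t : α × δ => (t.2, f t.1)) (X ω, W ω)) (w, q)
        = prob p (fun ω => (W ω, f (X ω))) (w, q) := rfl
    rw [hl] at hfib
    rw [hfib, Fintype.sum_prod_type]
    refine Finset.sum_congr rfl fun x' _ => ?_
    have step : ∀ w' : δ, (if ((fun t : α × δ => (t.2, f t.1)) (x', w')) = (w, q)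
        then prob p (fun ω => (X ω, W ω)) (x', w') else 0)
        = if w' = w then (if f x' = q then
            prob p (fun ω => (X ω, W ω)) (x', w') else 0) else 0 := by
      intro w'
      by_cases h1 : w' = w <;> by_cases h2 : f x' = q <;>
        simp [h1, h2, Prod.ext_iff]
    rw [Finset.sum_congr rfl fun w' _ => step w',
      Finset.sum_ite_eq' Finset.univ w]
    simp
  apply cmi_eq_zero_of p hp
  rintro ⟨x, z⟩ w q hne
  rw [hG] at hne
  by_cases hq : f x = q
  case neg => rw [if_neg hq] at hne; exact absurd rfl hne
  rw [if_pos hq] at hne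
  rw [hG, hXZQ, hPQ, hWQ, if_pos hq, if_pos hq, Finset.mul_sum, Finset.mul_sum]
  refine Finset.sum_congr rfl fun x' _ => ?_
  by_cases hx' : f x' = q
  · rw [if_pos hx', if_pos hx']
    exact perx x z w x' (by rw [hx', hq])
  · rw [if_neg hx', if_neg hx']
    simp

end DoubleMarkov


section KeyLemma
variable {Ω : Type*} [Fintype Ω] {α γ μ' ν' ρ' : Type*}
  [Fintype α] [DecidableEq α] [Fintype γ] [DecidableEq γ]
  [Fintype μ'] [DecidableEq μ'] [Fintype ν'] [DecidableEq ν']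
  [Fintype ρ'] [DecidableEq ρ']
  (p : Ω → ℝ) (hp : ∀ ω, 0 ≤ p ω) (hsum : ∑ ω, p ω = 1)

include hp hsum in
/-- data-processing bound for residual information along a protocol link -/
lemma RI_le (U : Ω → μ') (V : Ω → ν') (W : Ω → ρ') (X : Ω → α) (Z : Ω → γ)
    (φ : μ' × ρ' → α) (hX : ∀ ω, p ω ≠ 0 → X ω = φ (U ω, W ω))
    (ψ : ν' × ρ' → γ) (hZ : ∀ ω, p ω ≠ 0 → Z ω = ψ (V ω, W ω))
    (h1 : cmi p W Z X = 0) (h2 : cmi p W X Z = 0) :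
    RI p X Z ≤ cmi p U V W := by
  obtain ⟨f, g, hfg, hQ⟩ := double_markov p hp hsum X Z W h1 h2
  set Q : Ω → α := fun ω => f (X ω) with hQdef
  -- step 0 : `RI ≤ I(X;Z|Q)`
  have hbdd : BddBelow {r : ℝ | ∃ (f : α → α) (g : γ → α),
      (∀ ω, p ω ≠ 0 → f (X ω) = g (Z ω)) ∧ r = cmi p X Z (fun ω => f (X ω))} := by
    refine ⟨0, fun r hr => ?_⟩
    obtain ⟨f', g', -, rfl⟩ := hr
    exact cmi_nonneg p hp hsum _ _ _
  have hmem : cmi p X Z Q ∈ {r : ℝ | ∃ (f : α → α) (g : γ → α),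
      (∀ ω, p ω ≠ 0 → f (X ω) = g (Z ω)) ∧ r = cmi p X Z (fun ω => f (X ω))} :=
    ⟨f, g, hfg, rfl⟩
  have hRI : RI p X Z ≤ cmi p X Z Q := csInf_le hbdd hmem
  -- step 1 : `I(X;Z|Q) = I(X;Z|W,Q)` using `(X,Z) ⊥ W | Q`
  have hQ' : cmi p W (fun ω => (X ω, Z ω)) Q = 0 := by
    rw [cmi_comm]; exact hQ
  have dec1 : cmi p W (fun ω => (X ω, Z ω)) Q
      = cmi p W X Q + cmi p W Z (fun ω => (X ω, Q ω)) := cmi_chain p W X Z Q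
  have dec2 : cmi p W (fun ω => (X ω, Z ω)) Q
      = cmi p W Z Q + cmi p W X (fun ω => (Z ω, Q ω)) := by
    have hsw : cmi p W (fun ω => (X ω, Z ω)) Q
        = cmi p W (fun ω => (Z ω, X ω)) Q :=
      cmi_congr2 p W Q (u := fun t => (t.2, t.1)) (v := fun t => (t.2, t.1))
        (fun ω _ => rfl) (fun ω _ => rfl)
    rw [hsw]; exact cmi_chain p W Z X Q
  have hWXQ : cmi p W X Q = 0 := by
    have n1 := cmi_nonneg p hp hsum W X Q
    have n2 := cmi_nonneg p hp hsum W Z (fun ω => (X ω, Q ω))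
    rw [hQ'] at dec1
    linarith
  have hWXZQ : cmi p W X (fun ω => (Z ω, Q ω)) = 0 := by
    have n1 := cmi_nonneg p hp hsum W Z Q
    have n2 := cmi_nonneg p hp hsum W X (fun ω => (Z ω, Q ω))
    rw [hQ'] at dec2
    linarith
  have chainA : cmi p X (fun ω => (Z ω, W ω)) Q
      = cmi p X Z Q + cmi p X W (fun ω => (Z ω, Q ω)) := cmi_chain p X Z W Q
  have chainB : cmi p X (fun ω => (Z ω, W ω)) Q
      = cmi p X W Q + cmi p X Z (fun ω => (W ω, Q ω)) := by
    have hsw : cmi p X (fun ω => (Z ω, W ω)) Q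
        = cmi p X (fun ω => (W ω, Z ω)) Q :=
      cmi_congr2 p X Q (u := fun t => (t.2, t.1)) (v := fun t => (t.2, t.1))
        (fun ω _ => rfl) (fun ω _ => rfl)
    rw [hsw]; exact cmi_chain p X W Z Q
  have s1 : cmi p X Z Q = cmi p X Z (fun ω => (W ω, Q ω)) := by
    have c1 : cmi p X W (fun ω => (Z ω, Q ω)) = 0 := by
      rw [cmi_comm]; exact hWXZQ
    have c2 : cmi p X W Q = 0 := by rw [cmi_comm]; exact hWXQ
    rw [c1] at chainA
    rw [c2] at chainB
    linarith
  -- step 2 : `I(X;Z|W,Q) ≤ I(X;Z|W)` since `Q` is a function of `X`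
  have s2 : cmi p X Z (fun ω => (W ω, Q ω)) ≤ cmi p X Z W := by
    have ha : cmi p X Z W = cmi p (fun ω => (X ω, Q ω)) Z W :=
      cmi_congr1 p Z W (u := fun a => (a, f a)) (v := fun t => t.1)
        (fun ω _ => rfl) (fun ω _ => rfl)
    have hb : cmi p (fun ω => (X ω, Q ω)) Z W
        = cmi p Z (fun ω => (Q ω, X ω)) W := by
      rw [cmi_comm]
      exact cmi_congr2 p Z W (u := fun t => (t.2, t.1)) (v := fun t => (t.2, t.1))
        (fun ω _ => rfl) (fun ω _ => rfl)
    have hc : cmi p Z (fun ω => (Q ω, X ω)) W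
        = cmi p Z Q W + cmi p Z X (fun ω => (Q ω, W ω)) := cmi_chain p Z Q X W
    have hd : cmi p Z X (fun ω => (Q ω, W ω))
        = cmi p X Z (fun ω => (W ω, Q ω)) := by
      rw [cmi_comm]
      exact cmi_congr3 p X Z (u := fun t => (t.2, t.1)) (v := fun t => (t.2, t.1))
        (fun ω _ => rfl) (fun ω _ => rfl)
    have hn : 0 ≤ cmi p Z Q W := cmi_nonneg p hp hsum _ _ _
    rw [ha, hb, hc, hd]
    linarith
  -- step 3 : data processing up to the protocol messages
  have s3a : cmi p X Z W ≤ cmi p U Z W :=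
    cmi_fn_le_left p hp hsum Z W hX
  have s3b : cmi p U Z W ≤ cmi p U V W :=
    cmi_fn_le_right p hp hsum U W hZ
  calc RI p X Z ≤ cmi p X Z Q := hRI
    _ = cmi p X Z (fun ω => (W ω, Q ω)) := s1
    _ ≤ cmi p X Z W := s2
    _ ≤ cmi p U Z W := s3a
    _ ≤ cmi p U V W := s3b

end KeyLemma


theorem stmt19 {Ω : Type*} [Fintype Ω] {α β γ μ ν ρ : Type*}
    [Fintype α] [DecidableEq α] [Fintype β] [DecidableEq β] [Fintype γ] [DecidableEq γ]
    [Fintype μ] [DecidableEq μ] [Fintype ν] [DecidableEq ν] [Fintype ρ] [DecidableEq ρ]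
    (p : Ω → ℝ) (hp : ∀ ω, 0 ≤ p ω) (hsum : ∑ ω, p ω = 1)
    (X : Ω → α) (Y : Ω → β) (Z : Ω → γ)
    (M12 : Ω → μ) (M23 : Ω → ν) (M31 : Ω → ρ)
    (hcorX : condEnt p X (fun ω => (M12 ω, M31 ω)) = 0)
    (hcorY : condEnt p Y (fun ω => (M12 ω, M23 ω)) = 0)
    (hcorZ : condEnt p Z (fun ω => (M23 ω, M31 ω)) = 0)
    (hprivA : cmi p (fun ω => (M12 ω, M31 ω)) (fun ω => (Y ω, Z ω)) X = 0)
    (hprivB : cmi p (fun ω => (M12 ω, M23 ω)) (fun ω => (X ω, Z ω)) Y = 0)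
    (hprivC : cmi p (fun ω => (M23 ω, M31 ω)) (fun ω => (X ω, Y ω)) Z = 0)
    (hInfoIneq : mi p M12 M23 ≥ cmi p M12 M23 M31) :
    ent p M23 ≥ RI p X Z + RI p X Y + condEnt p (fun ω => (Y ω, Z ω)) X := by
  -- the deterministic output maps
  obtain ⟨φX, hφX⟩ := condEnt_zero_fun p hp hsum hcorX
  obtain ⟨φY, hφY⟩ := condEnt_zero_fun p hp hsum hcorY
  obtain ⟨φZ, hφZ⟩ := condEnt_zero_fun p hp hsum hcorZ
  -- squeezed privacy conditions
  have hCZX : cmi p M31 Z X = 0 := by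
    have le1 : cmi p M31 Z X ≤ cmi p (fun ω => (M12 ω, M31 ω)) Z X :=
      cmi_fn_le_left p hp hsum Z X (φ := fun t => t.1.2) (fun ω _ => rfl)
    have le2 : cmi p (fun ω => (M12 ω, M31 ω)) Z X
        ≤ cmi p (fun ω => (M12 ω, M31 ω)) (fun ω => (Y ω, Z ω)) X :=
      cmi_fn_le_right p hp hsum _ X (ψ := fun t => t.1.2) (fun ω _ => rfl)
    have := cmi_nonneg p hp hsum M31 Z X
    rw [hprivA] at le2
    linarith
  have hCXZ : cmi p M31 X Z = 0 := by
    have le1 : cmi p M31 X Z ≤ cmi p (fun ω => (M23 ω, M31 ω)) X Z :=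
      cmi_fn_le_left p hp hsum X Z (φ := fun t => t.1.2) (fun ω _ => rfl)
    have le2 : cmi p (fun ω => (M23 ω, M31 ω)) X Z
        ≤ cmi p (fun ω => (M23 ω, M31 ω)) (fun ω => (X ω, Y ω)) Z :=
      cmi_fn_le_right p hp hsum _ Z (ψ := fun t => t.1.1) (fun ω _ => rfl)
    have := cmi_nonneg p hp hsum M31 X Z
    rw [hprivC] at le2
    linarith
  have hAYX : cmi p M12 Y X = 0 := by
    have le1 : cmi p M12 Y X ≤ cmi p (fun ω => (M12 ω, M31 ω)) Y X :=
      cmi_fn_le_left p hp hsum Y X (φ := fun t => t.1.1) (fun ω _ => rfl)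
    have le2 : cmi p (fun ω => (M12 ω, M31 ω)) Y X
        ≤ cmi p (fun ω => (M12 ω, M31 ω)) (fun ω => (Y ω, Z ω)) X :=
      cmi_fn_le_right p hp hsum _ X (ψ := fun t => t.1.1) (fun ω _ => rfl)
    have := cmi_nonneg p hp hsum M12 Y X
    rw [hprivA] at le2
    linarith
  have hAXY : cmi p M12 X Y = 0 := by
    have le1 : cmi p M12 X Y ≤ cmi p (fun ω => (M12 ω, M23 ω)) X Y :=
      cmi_fn_le_left p hp hsum X Y (φ := fun t => t.1.1) (fun ω _ => rfl)
    have le2 : cmi p (fun ω => (M12 ω, M23 ω)) X Y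
        ≤ cmi p (fun ω => (M12 ω, M23 ω)) (fun ω => (X ω, Z ω)) Y :=
      cmi_fn_le_right p hp hsum _ Y (ψ := fun t => t.1.1) (fun ω _ => rfl)
    have := cmi_nonneg p hp hsum M12 X Y
    rw [hprivB] at le2
    linarith
  -- residual information bounds
  have claimα : RI p X Z ≤ cmi p M12 M23 M31 :=
    RI_le p hp hsum M12 M23 M31 X Z φX hφX φZ hφZ hCZX hCXZ
  have claimβ : RI p X Y ≤ cmi p M31 M23 M12 :=
    RI_le p hp hsum M31 M23 M12 X Y (fun t => φX (t.2, t.1))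
      (fun ω hω => hφX ω hω) (fun t => φY (t.2, t.1))
      (fun ω hω => hφY ω hω) hAYX hAXY
  -- conditional entropy part
  have a1 : condEnt p M23 (fun ω => (M12 ω, M31 ω))
      = condEnt p M23 (fun ω => ((M12 ω, M31 ω), X ω)) :=
    condEnt_congr2 p M23 (u := fun t => (t, φX t)) (v := fun t => t.1)
      (fun ω hω => by rw [← hφX ω hω]) (fun ω _ => rfl)
  have a2 : condEnt p (fun ω => (Y ω, Z ω)) (fun ω => ((M12 ω, M31 ω), X ω))
      ≤ condEnt p M23 (fun ω => ((M12 ω, M31 ω), X ω)) :=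
    condEnt_fn_le p hp hsum _
      (ψ := fun t => (φY (t.2.1.1, t.1), φZ (t.1, t.2.1.2)))
      (fun ω hω => by dsimp only; rw [← hφY ω hω, ← hφZ ω hω])
  have a3 : condEnt p (fun ω => (Y ω, Z ω)) (fun ω => ((M12 ω, M31 ω), X ω))
      = condEnt p (fun ω => (Y ω, Z ω)) X := by
    have e0 : ent p (fun ω => ((Y ω, Z ω), ((M12 ω, M31 ω), X ω)))
        = ent p (fun ω => ((M12 ω, M31 ω), ((Y ω, Z ω), X ω))) :=
      ent_congr p (u := fun t => (t.2.1, (t.1, t.2.2)))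
        (v := fun t => (t.2.1, (t.1, t.2.2))) (fun ω _ => rfl) (fun ω _ => rfl)
    have hA := hprivA
    unfold cmi at hA
    dsimp only at hA
    unfold condEnt
    dsimp only
    rw [e0]
    linarith
  -- mutual information part
  have b1 : mi p M23 (fun ω => (M12 ω, M31 ω))
      = mi p M23 M12 + cmi p M23 M31 M12 := by
    have e1 : ent p (fun ω => (M12 ω, M31 ω)) = ent p (fun ω => (M31 ω, M12 ω)) :=
      ent_congr p (u := fun t => (t.2, t.1)) (v := fun t => (t.2, t.1))
        (fun ω _ => rfl) (fun ω _ => rfl)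
    have e2 : ent p (fun ω => (M23 ω, (M12 ω, M31 ω)))
        = ent p (fun ω => (M23 ω, M31 ω, M12 ω)) :=
      ent_congr p (u := fun t => (t.1, (t.2.2, t.2.1)))
        (v := fun t => (t.1, (t.2.2, t.2.1))) (fun ω _ => rfl) (fun ω _ => rfl)
    unfold mi cmi
    dsimp only
    rw [e1, e2]
    ring
  have b2 : mi p M23 M12 = mi p M12 M23 := by
    have e1 : ent p (fun ω => (M23 ω, M12 ω)) = ent p (fun ω => (M12 ω, M23 ω)) :=
      ent_congr p (u := fun t => (t.2, t.1)) (v := fun t => (t.2, t.1))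
        (fun ω _ => rfl) (fun ω _ => rfl)
    unfold mi
    rw [e1]
    ring
  have b4 : cmi p M23 M31 M12 = cmi p M31 M23 M12 := cmi_comm p M23 M31 M12
  have goal1 : ent p M23 = mi p M23 (fun ω => (M12 ω, M31 ω))
      + condEnt p M23 (fun ω => (M12 ω, M31 ω)) := by
    unfold mi condEnt
    ring
  linarith [goal1, a1, a2, a3, b1, b2, b4, hInfoIneq, claimα, claimβ]
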